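/- Let s be a positive integer and r ≥ 2s+1. Then there exists a function g from the s-subsets of [r] = {0,1,...,r-1} to the 2s-subsets of [r] such that (I) for every s-subset A, A ⊂ g(A), and (II) for any two s-subsets A, B with A ∩ B = ∅, g(A) ≠ g(B). -/

import Mathlib

/-- The `s` smallest elements of a finset. -/
def firstn {α : Type*} [LinearOrder α] (s : ℕ) (T : Finset α) : Finset α :=
  ((T.sort (· ≤ ·)).take s).toFinset

theorem firstn_subset {α : Type*} [LinearOrder α] (s : ℕ) (T : Finset α) :
    firstn s T ⊆ T := by
  intro x hx
  simp only [firstn, List.mem_toFinset] at hx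
  have := List.mem_of_mem_take hx
  rwa [Finset.mem_sort] at this

theorem card_firstn {α : Type*} [LinearOrder α] {s : ℕ} {T : Finset α} (h : s ≤ T.card) :
    (firstn s T).card = s := by
  have hnd : ((T.sort (· ≤ ·)).take s).Nodup :=
    (T.sort_nodup (· ≤ ·)).sublist (List.take_sublist _ _)
  rw [firstn, List.card_toFinset, hnd.dedup, List.length_take, Finset.length_sort]
  omega

theorem lt_of_mem_firstn {α : Type*} [LinearOrder α] {s : ℕ} {T : Finset α} {x z : α}
    (hx : x ∈ firstn s T) (hz : z ∈ T) (hz' : z ∉ firstn s T) : x < z := by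
  set l := T.sort (· ≤ ·) with hl
  have hsort : l.Pairwise (· < ·) := T.sortedLT_sort.pairwise
  have hx' : x ∈ l.take s := by simpa [firstn] using hx
  have hz'' : z ∉ l.take s := by simpa [firstn] using hz'
  have hzl : z ∈ l.take s ++ l.drop s := by
    rw [List.take_append_drop]; rwa [hl, Finset.mem_sort]
  have hzd : z ∈ l.drop s := by
    rcases List.mem_append.mp hzl with h | h
    · exact absurd h hz''
    · exact h
  have hsort' : (l.take s ++ l.drop s).Pairwise (· < ·) := by
    rw [List.take_append_drop]; exact hsort
  exact (List.pairwise_append.mp hsort').2.2 x hx' z hzd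

/-- Pick the `s` elements of `T` that come "soonest" cyclically after `a`. -/
def pick {r : ℕ} [NeZero r] (s : ℕ) (a : Fin r) (T : Finset (Fin r)) : Finset (Fin r) :=
  (firstn s (T.image (· - a))).image (· + a)

theorem pick_subset {r : ℕ} [NeZero r] (s : ℕ) (a : Fin r) (T : Finset (Fin r)) :
    pick s a T ⊆ T := by
  intro x hx
  simp only [pick, Finset.mem_image] at hx
  obtain ⟨y, hy, rfl⟩ := hx
  have := firstn_subset s _ hy
  simp only [Finset.mem_image] at this
  obtain ⟨t, ht, rfl⟩ := this
  simpa using ht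

theorem card_pick {r : ℕ} [NeZero r] {s : ℕ} (a : Fin r) {T : Finset (Fin r)}
    (h : s ≤ T.card) : (pick s a T).card = s := by
  have hinj : Function.Injective (fun x : Fin r => x - a) := sub_left_injective
  have hinj' : Function.Injective (fun x : Fin r => x + a) := add_left_injective a
  rw [pick, Finset.card_image_of_injective _ hinj', card_firstn]
  rwa [Finset.card_image_of_injective _ hinj]

theorem pick_lt {r : ℕ} [NeZero r] {s : ℕ} {a : Fin r} {T : Finset (Fin r)} {x z : Fin r}
    (hx : x ∈ pick s a T) (hz : z ∈ T) (hz' : z ∉ pick s a T) :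
    (x - a).val < (z - a).val := by
  simp only [pick, Finset.mem_image] at hx
  obtain ⟨y, hy, rfl⟩ := hx
  have hy' : y + a - a = y := add_sub_cancel_right y a
  rw [hy']
  have hzT : z - a ∈ T.image (· - a) := Finset.mem_image_of_mem _ hz
  have hzn : z - a ∉ firstn s (T.image (· - a)) := by
    intro hc
    apply hz'
    simp only [pick, Finset.mem_image]
    exact ⟨z - a, hc, sub_add_cancel z a⟩
  have hlt : y < z - a := lt_of_mem_firstn hy hzT hzn
  exact hlt

/-- The map `g`. -/
def gg {r : ℕ} [NeZero r] (s : ℕ) (A : Finset (Fin r)) : Finset (Fin r) :=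
  if h : A.Nonempty then A ∪ pick s (A.min' h) Aᶜ else ∅

theorem val_sub_add_val_sub {r : ℕ} [NeZero r] {a b : Fin r} (h : a ≠ b) :
    (b - a).val + (a - b).val = r := by
  have h0 : (b - a) + (a - b) = 0 := by rw [sub_add_sub_cancel, sub_self]
  have hv : ((b - a).val + (a - b).val) % r = 0 := by
    have := congrArg Fin.val h0
    rwa [Fin.val_add, Fin.val_zero] at this
  have h1 : (b - a) ≠ 0 := sub_ne_zero.mpr (Ne.symm h)
  have h2 : (a - b) ≠ 0 := sub_ne_zero.mpr h
  have h1' : (b - a).val ≠ 0 := fun hc => h1 (Fin.ext (by simp [hc]))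
  have h2' : (a - b).val ≠ 0 := fun hc => h2 (Fin.ext (by simp [hc]))
  have hlt : (b - a).val + (a - b).val < 2 * r := by
    have := (b - a).isLt; have := (a - b).isLt; omega
  obtain ⟨k, hk⟩ := Nat.dvd_of_mod_eq_zero hv
  have hk2 : k < 2 := by
    by_contra hc
    push_neg at hc
    have : 2 * r ≤ r * k := by
      calc 2 * r = r * 2 := by ring
      _ ≤ r * k := Nat.mul_le_mul_left r hc
    omega
  interval_cases k <;> omega

theorem stmt0 (s r : ℕ) (hs : 0 < s) (hr : 2 * s + 1 ≤ r) :
    ∃ g : Finset (Fin r) → Finset (Fin r),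
      (∀ A : Finset (Fin r), A.card = s → (g A).card = 2 * s ∧ A ⊂ g A) ∧
      (∀ A B : Finset (Fin r), A.card = s → B.card = s → Disjoint A B → g A ≠ g B) := by
  haveI : NeZero r := ⟨by omega⟩
  refine ⟨gg s, ?_, ?_⟩
  · -- cardinality and strict inclusion
    intro A hA
    have hne : A.Nonempty := Finset.card_pos.mp (by omega)
    have hcompl : s ≤ Aᶜ.card := by
      rw [Finset.card_compl, hA]
      simp only [Fintype.card_fin]
      omega
    have hgg : gg s A = A ∪ pick s (A.min' hne) Aᶜ := dif_pos hne
    have hsub : pick s (A.min' hne) Aᶜ ⊆ Aᶜ := pick_subset _ _ _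
    have hdisj : Disjoint A (pick s (A.min' hne) Aᶜ) :=
      Finset.disjoint_left.mpr fun x hx hx' => (Finset.mem_compl.mp (hsub hx')) hx
    have hcard : (gg s A).card = 2 * s := by
      rw [hgg, Finset.card_union_of_disjoint hdisj, hA, card_pick _ hcompl]
      omega
    refine ⟨hcard, ?_⟩
    rw [hgg]
    refine Finset.ssubset_iff_of_subset Finset.subset_union_left |>.mpr ?_
    have hpne : (pick s (A.min' hne) Aᶜ).Nonempty :=
      Finset.card_pos.mp (by rw [card_pick _ hcompl]; omega)
    obtain ⟨x, hx⟩ := hpne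
    exact ⟨x, Finset.mem_union_right _ hx, (Finset.mem_compl.mp (hsub hx))⟩
  · -- injectivity on disjoint pairs
    intro A B hA hB hAB hEq
    have hneA : A.Nonempty := Finset.card_pos.mp (by omega)
    have hneB : B.Nonempty := Finset.card_pos.mp (by omega)
    set a := A.min' hneA with ha
    set b := B.min' hneB with hb
    have hggA : gg s A = A ∪ pick s a Aᶜ := dif_pos hneA
    have hggB : gg s B = B ∪ pick s b Bᶜ := dif_pos hneB
    have hU : A ∪ pick s a Aᶜ = B ∪ pick s b Bᶜ := by rw [← hggA, hEq, hggB]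
    have hcomplA : s ≤ Aᶜ.card := by
      rw [Finset.card_compl, hA]; simp only [Fintype.card_fin]; omega
    have hcomplB : s ≤ Bᶜ.card := by
      rw [Finset.card_compl, hB]; simp only [Fintype.card_fin]; omega
    have hcardC : (A ∪ pick s a Aᶜ).card = 2 * s := by
      have hdisj : Disjoint A (pick s a Aᶜ) :=
        Finset.disjoint_left.mpr fun x hx hx' =>
          (Finset.mem_compl.mp (pick_subset s a Aᶜ hx')) hx
      rw [Finset.card_union_of_disjoint hdisj, hA, card_pick _ hcomplA]
      omega
    have hz : ∃ z : Fin r, z ∉ A ∪ pick s a Aᶜ := by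
      by_contra hc
      push_neg at hc
      have : A ∪ pick s a Aᶜ = Finset.univ := Finset.eq_univ_of_forall hc
      rw [this, Finset.card_univ, Fintype.card_fin] at hcardC
      omega
    obtain ⟨z, hzC⟩ := hz
    have hzC' : z ∉ B ∪ pick s b Bᶜ := by rw [← hU]; exact hzC
    have haA : a ∈ A := A.min'_mem hneA
    have hbB : b ∈ B := B.min'_mem hneB
    have hab : a ≠ b := fun h => Finset.disjoint_left.mp hAB haA (h ▸ hbB)
    have hbA : b ∉ A := fun h => Finset.disjoint_left.mp hAB h hbB
    have hbpick : b ∈ pick s a Aᶜ := by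
      have : b ∈ A ∪ pick s a Aᶜ := by rw [hU]; exact Finset.mem_union_left _ hbB
      rcases Finset.mem_union.mp this with h | h
      · exact absurd h hbA
      · exact h
    have haB : a ∉ B := fun h => Finset.disjoint_left.mp hAB haA h
    have hapick : a ∈ pick s b Bᶜ := by
      have : a ∈ B ∪ pick s b Bᶜ := by rw [← hU]; exact Finset.mem_union_left _ haA
      rcases Finset.mem_union.mp this with h | h
      · exact absurd h haB
      · exact h
    have hzA : z ∈ Aᶜ := Finset.mem_compl.mpr fun h => hzC (Finset.mem_union_left _ h)
    have hzB : z ∈ Bᶜ := Finset.mem_compl.mpr fun h => hzC' (Finset.mem_union_left _ h)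
    have hzpA : z ∉ pick s a Aᶜ := fun h => hzC (Finset.mem_union_right _ h)
    have hzpB : z ∉ pick s b Bᶜ := fun h => hzC' (Finset.mem_union_right _ h)
    -- the two key inequalities
    have key1 : (b - a).val < (z - a).val := pick_lt hbpick hzA hzpA
    have key2 : (a - b).val < (z - b).val := pick_lt hapick hzB hzpB
    -- arithmetic contradiction
    have hsum : (b - a).val + (a - b).val = r := val_sub_add_val_sub hab
    have hrel : (z - a) = (z - b) + (b - a) := (sub_add_sub_cancel z b a).symm
    have hrel' : (z - a).val = ((z - b).val + (b - a).val) % r := by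
      rw [hrel, Fin.val_add]
    set u := (b - a).val
    set v := (a - b).val
    set p := (z - a).val
    set q := (z - b).val
    have hp : p < r := (z - a).isLt
    have hq : q < r := (z - b).isLt
    have hmod : p = q + u ∨ p = q + u - r := by
      rcases lt_or_ge (q + u) r with h | h
      · left; rw [hrel', Nat.mod_eq_of_lt h]
      · right
        rw [hrel', Nat.mod_eq_sub_mod h, Nat.mod_eq_of_lt (by omega)]
    omega
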